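/- Let n, m be positive integers, d = n + m, and Θ a real n×m matrix. Suppose 0 < U < 1 ≤ X and there exist x ∈ ℤ^m \ {0} and y ∈ ℤ^n with |x|_∞ ≤ X and |Θx − y|_∞ ≤ U. Then there exist x ∈ ℤ^m and y ∈ ℤ^n \ {0} such that |y|_∞ ≤ Y and |ᵗΘ y − x|_∞ ≤ V, where Y = (d−1)·(X^m U^{1−m})^{1/(d−1)} and V = (d−1)·(X^{1−n} U^n)^{1/(d−1)}. -/

import Mathlib

open Matrix

noncomputable section

/-- Coordinatewise cast of an integer vector to a real vector. -/
def ivec {k : ℕ} (x : Fin k → ℤ) : Fin k → ℝ := fun i => (x i : ℝ)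

open MeasureTheory Module Submodule in
lemma minkowski_forms {ι : Type*} [Fintype ι] [DecidableEq ι] [Nonempty ι]
    (A : Matrix ι ι ℝ) (ρ : ι → ℝ) (hρ : ∀ i, 0 < ρ i) (hdet0 : A.det ≠ 0)
    (hprod : |A.det| < ∏ i, ρ i) :
    ∃ v : ι → ℤ, v ≠ 0 ∧ ∀ i, |A.mulVec (fun j => (v j : ℝ)) i| ≤ ρ i := by
  classical
  set b := Pi.basisFun ℝ ι
  set L : AddSubgroup (ι → ℝ) := (span ℤ (Set.range b)).toAddSubgroup
  haveI : Countable L := inferInstanceAs (Countable (span ℤ (Set.range ⇑b)))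
  have fund := ZSpan.isAddFundamentalDomain' b (volume : Measure (ι → ℝ))
  set box : Set (ι → ℝ) := Set.pi Set.univ fun i => Set.Icc (-ρ i) (ρ i) with hbox
  set s : Set (ι → ℝ) := (Matrix.toLin' A) ⁻¹' box with hs
  have hμbox : volume box = ENNReal.ofReal (∏ i, (2 * ρ i)) := by
    rw [hbox, volume_pi, Measure.pi_pi]
    rw [ENNReal.ofReal_prod_of_nonneg (fun i _ => by linarith [hρ i])]
    refine Finset.prod_congr rfl fun i _ => ?_
    rw [Real.volume_Icc]; ring_nf
  have hdetlin : LinearMap.det (Matrix.toLin' A) ≠ 0 := by rwa [LinearMap.det_toLin']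
  have hμs : volume s = ENNReal.ofReal |(A.det)⁻¹| * ENNReal.ofReal (∏ i, (2 * ρ i)) := by
    rw [hs, Measure.addHaar_preimage_linearMap volume hdetlin, hμbox, LinearMap.det_toLin']
  have hμF : volume (ZSpan.fundamentalDomain b) = 1 := by
    rw [ZSpan.volume_fundamentalDomain]
    have : (Matrix.of ⇑b) = (1 : Matrix ι ι ℝ) := by
      ext i j
      simp [b, Matrix.one_apply, Pi.basisFun_apply, Pi.single_apply, eq_comm]
    rw [this, Matrix.det_one]
    norm_num
  have hρ2 : (0:ℝ) < ∏ i, ρ i := Finset.prod_pos fun i _ => hρ i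
  have hcond : volume (ZSpan.fundamentalDomain b) * 2 ^ finrank ℝ (ι → ℝ) < volume s := by
    have hreal : (2:ℝ) ^ Fintype.card ι < |A.det⁻¹| * ∏ i, (2 * ρ i) := by
      rw [Finset.prod_mul_distrib, Finset.prod_const, Finset.card_univ, abs_inv,
        inv_mul_eq_div, lt_div_iff₀ (by positivity : (0:ℝ) < |A.det|)]
      exact mul_lt_mul_of_pos_left hprod (by positivity)
    have h2 : ((2 : ENNReal) ^ Fintype.card ι) = ENNReal.ofReal (2 ^ Fintype.card ι) := by
      simp [ENNReal.ofReal_pow]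
    rw [hμF, one_mul, hμs, finrank_fintype_fun_eq_card,
      ← ENNReal.ofReal_mul (by positivity), h2]
    exact (ENNReal.ofReal_lt_ofReal_iff (lt_trans (by positivity) hreal)).mpr hreal
  have hsymm : ∀ z ∈ s, -z ∈ s := by
    intro z hz
    simp only [hs, Set.mem_preimage, map_neg] at hz ⊢
    intro i _
    have := hz i (Set.mem_univ i)
    simp only [Set.mem_Icc, Pi.neg_apply] at this ⊢
    constructor <;> linarith [this.1, this.2]
  have hconv : Convex ℝ s := by
    refine Convex.linear_preimage ?_ _
    exact convex_pi fun i _ => convex_Icc _ _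
  obtain ⟨w, hw0, hws⟩ :=
    exists_ne_zero_mem_lattice_of_measure_mul_two_pow_lt_measure (μ := volume)
      (L := L) fund hsymm hconv hcond
  have hwmem : (w : ι → ℝ) ∈ span ℤ (Set.range b) := w.2
  rw [Basis.mem_span_iff_repr_mem] at hwmem
  choose v hv using hwmem
  have hb : ∀ i, b.repr (w : ι → ℝ) i = (w : ι → ℝ) i := fun i => by
    simp [b, Pi.basisFun_repr]
  refine ⟨v, ?_, ?_⟩
  · intro hv0
    apply hw0
    have : (w : ι → ℝ) = 0 := by
      funext i
      have := hv i
      rw [hb i] at this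
      rw [← this, congrFun hv0 i]; simp
    exact Subtype.coe_injective (by simpa using this)
  · intro i
    have : (fun j => ((v j : ℝ))) = (w : ι → ℝ) := by
      funext j; rw [← hb j, ← hv j]; simp
    rw [this]
    have hmem : Matrix.toLin' A (w : ι → ℝ) ∈ box := hws
    have := hmem i (Set.mem_univ i)
    rw [Set.mem_Icc] at this
    rw [abs_le, ← Matrix.toLin'_apply]
    exact ⟨this.1, this.2⟩

set_option maxHeartbeats 1000000 in
lemma key_step (n m : ℕ) (hn : 0 < n) (hm : 0 < m) (Θ : Matrix (Fin n) (Fin m) ℝ)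
    (X U Y V C : ℝ) (hU0 : 0 < U) (hX : 1 ≤ X)
    (hYC : Y = ((n + m : ℝ) - 1) * C / U) (hVC : V = ((n + m : ℝ) - 1) * C / X)
    (hC0 : 0 < C) (hC : C ^ (m + n - 1) = X ^ m * U ^ n)
    (x : Fin m → ℤ) (y : Fin n → ℤ) (hx : x ≠ 0)
    (h1 : ‖ivec x‖ ≤ X) (h2 : ‖Θ.mulVec (ivec x) - ivec y‖ ≤ U)
    (ε : ℝ) (hε0 : 0 < ε) (hε2 : ε ≤ 1/2) (hV2 : V < 1/2) :
    ∃ x' : Fin m → ℤ, ∃ y' : Fin n → ℤ, y' ≠ 0 ∧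
      ‖ivec y'‖ ≤ (1+ε) * Y ∧ ‖(Θᵀ).mulVec (ivec y') - ivec x'‖ ≤ (1+ε) * V := by
  classical
  have hX0 : (0:ℝ) < X := lt_of_lt_of_le zero_lt_one hX
  set K : ℕ := m + n - 1 with hK
  have hK1 : 1 ≤ K := by omega
  have hKcast : (K : ℝ) = (n + m : ℝ) - 1 := by
    rw [hK]; push_cast [Nat.cast_sub (by omega : 1 ≤ m + n)]; ring
  have hK0 : (0:ℝ) < (K : ℝ) := by
    have : 0 < K := hK1
    exact_mod_cast this
  -- the vectors
  set e : Fin n → ℝ := Θ.mulVec (ivec x) - ivec y with he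
  set lv : (Fin m ⊕ Fin n) → ℝ := Sum.elim (fun _ => X) (fun _ => U) with hlv
  set c : (Fin m ⊕ Fin n) → ℝ := Sum.elim (ivec x) e with hc'
  have hlv0 : ∀ i, 0 < lv i := by
    rintro (k | i)
    · simpa [hlv] using hX0
    · simpa [hlv] using hU0
  have hclv : ∀ i, |c i| ≤ lv i := by
    rintro (k | i)
    · simpa [hc', hlv] using le_trans (norm_le_pi_norm (ivec x) k) h1
    · simpa [hc', hlv, he] using le_trans (norm_le_pi_norm (Θ.mulVec (ivec x) - ivec y) i) h2
  -- choice of i₀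
  obtain ⟨i₀, -, hmax⟩ := Finset.exists_max_image Finset.univ (fun i => |c i| / lv i)
    ⟨Sum.inl ⟨0, hm⟩, Finset.mem_univ _⟩
  have hmax' : ∀ i, |c i| / lv i ≤ |c i₀| / lv i₀ := fun i => hmax i (Finset.mem_univ i)
  have hc0 : 0 < |c i₀| := by
    obtain ⟨k, hk⟩ : ∃ k, x k ≠ 0 := by
      by_contra h; push_neg at h; exact hx (funext h)
    have h1k : (1:ℝ) ≤ |c (Sum.inl k)| := by
      simp only [hc', Sum.elim_inl, ivec]
      rw [← Int.cast_abs]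
      exact_mod_cast Int.one_le_abs hk
    have hratio : 0 < |c i₀| / lv i₀ :=
      lt_of_lt_of_le (div_pos (by linarith) (hlv0 (Sum.inl k))) (hmax' (Sum.inl k))
    have hpos := mul_pos hratio (hlv0 i₀)
    rwa [div_mul_cancel₀ _ (ne_of_gt (hlv0 i₀))] at hpos
  -- matrices
  set MS : Matrix (Fin m ⊕ Fin n) (Fin m ⊕ Fin n) ℝ := fromBlocks 1 (-Θᵀ) 0 1 with hMS
  set MC : Matrix (Fin m ⊕ Fin n) (Fin m ⊕ Fin n) ℝ := Matrix.updateRow 1 i₀ c with hMC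
  have hdetMS : MS.det = 1 := by
    rw [hMS, Matrix.det_fromBlocks_zero₂₁, Matrix.det_one, Matrix.det_one, mul_one]
  have hdetMC : MC.det = c i₀ := by
    have hsum : c = ∑ j, c j • (1 : Matrix (Fin m ⊕ Fin n) (Fin m ⊕ Fin n) ℝ) j := by
      funext j'
      simp [Matrix.one_apply, Pi.single_apply]
    rw [hMC]
    conv_lhs => rw [hsum]
    rw [Matrix.det_updateRow_sum]
    simp
  set A : Matrix (Fin m ⊕ Fin n) (Fin m ⊕ Fin n) ℝ := MC * MS with hA
  have hdetA : A.det = c i₀ := by rw [hA, Matrix.det_mul, hdetMS, hdetMC, mul_one]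
  -- the bounds
  set ρ : (Fin m ⊕ Fin n) → ℝ := fun i => if i = i₀ then 1 - ε^2 else (1+ε) * C / lv i with hρ'
  have hρi₀ : ρ i₀ = 1 - ε^2 := by simp only [hρ', if_pos rfl]
  have hρne : ∀ i, i ≠ i₀ → ρ i = (1+ε) * C / lv i := by
    intro i hi; simp only [hρ', if_neg hi]
  have hρpos : ∀ i, 0 < ρ i := by
    intro i
    by_cases hi : i = i₀
    · rw [hi, hρi₀]; nlinarith
    · rw [hρne i hi]; apply div_pos (by nlinarith) (hlv0 i)
  -- products
  have hprodlv : ∏ i, lv i = X ^ m * U ^ n := by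
    rw [hlv, Fintype.prod_sum_type]
    simp [Finset.prod_const]
  have hlvne : lv i₀ ≠ 0 := ne_of_gt (hlv0 i₀)
  have hXU0 : (0:ℝ) < X ^ m * U ^ n := by positivity
  have heraseprod : ∏ i ∈ Finset.univ.erase i₀, lv i = (X ^ m * U ^ n) / lv i₀ := by
    have h := Finset.mul_prod_erase Finset.univ lv (Finset.mem_univ i₀)
    rw [hprodlv] at h
    field_simp [← h]
    rw [← h]; ring
  have hcarderase : (Finset.univ.erase i₀).card = K := by
    rw [Finset.card_erase_of_mem (Finset.mem_univ i₀)]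
    simp [hK]
  have hprodρ : ∏ i, ρ i = (1 - ε^2) * ((1+ε) ^ K * lv i₀) := by
    rw [← Finset.mul_prod_erase Finset.univ ρ (Finset.mem_univ i₀), hρi₀]
    have h2 : ∏ i ∈ Finset.univ.erase i₀, ρ i = (1+ε) ^ K * lv i₀ := by
      have hcg : ∀ i ∈ Finset.univ.erase i₀, ρ i = ((1+ε) * C) / lv i :=
        fun i hi => hρne i (Finset.ne_of_mem_erase hi)
      rw [Finset.prod_congr rfl hcg, Finset.prod_div_distrib, Finset.prod_const,
        hcarderase, heraseprod, mul_pow, hC]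
      field_simp
    rw [h2]
  have hmink : |A.det| < ∏ i, ρ i := by
    rw [hdetA, hprodρ]
    have hpow : (1+ε) ≤ (1+ε) ^ K := by
      calc (1+ε) = (1+ε)^1 := (pow_one _).symm
      _ ≤ (1+ε)^K := pow_le_pow_right₀ (by linarith) hK1
    have hfac : 1 < (1 - ε^2) * (1+ε) := by nlinarith
    have hlvpos := hlv0 i₀
    have hle : |c i₀| ≤ lv i₀ := hclv i₀
    have hmono : (1 - ε^2) * (1+ε) * lv i₀ ≤ (1 - ε^2) * ((1+ε)^K * lv i₀) := by
      have ha : (1+ε) * lv i₀ ≤ (1+ε)^K * lv i₀ :=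
        mul_le_mul_of_nonneg_right hpow (le_of_lt hlvpos)
      have hb : (0:ℝ) ≤ 1 - ε^2 := by nlinarith
      calc (1 - ε^2) * (1+ε) * lv i₀ = (1 - ε^2) * ((1+ε) * lv i₀) := by ring
        _ ≤ (1 - ε^2) * ((1+ε)^K * lv i₀) := mul_le_mul_of_nonneg_left ha hb
    calc |c i₀| ≤ lv i₀ := hle
      _ < (1 - ε^2) * (1+ε) * lv i₀ := by
          have hm2 := mul_lt_mul_of_pos_right hfac hlvpos
          linarith [hm2]
      _ ≤ (1 - ε^2) * ((1+ε)^K * lv i₀) := hmono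
  have hdet0 : A.det ≠ 0 := by rw [hdetA]; exact fun h => by simp [h] at hc0
  -- apply Minkowski
  haveI : Nonempty (Fin m ⊕ Fin n) := ⟨Sum.inl ⟨0, hm⟩⟩
  obtain ⟨v, hv0, hvb⟩ := minkowski_forms A ρ hρpos hdet0 hmink
  set x' : Fin m → ℤ := fun k => v (Sum.inl k) with hx'
  set y' : Fin n → ℤ := fun i => v (Sum.inr i) with hy'
  set vR : (Fin m ⊕ Fin n) → ℝ := fun j => (v j : ℝ) with hvR
  set t : (Fin m ⊕ Fin n) → ℝ := MS.mulVec vR with ht'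
  have ht : t = Sum.elim (ivec x' - Θᵀ.mulVec (ivec y')) (ivec y') := by
    rw [ht', hMS, Matrix.fromBlocks_mulVec]
    have e1 : vR ∘ Sum.inl = ivec x' := rfl
    have e2 : vR ∘ Sum.inr = ivec y' := rfl
    rw [e1, e2]
    simp [Matrix.neg_mulVec, Matrix.one_mulVec, Matrix.zero_mulVec, sub_eq_add_neg]
  have hAmul : ∀ i, A.mulVec vR i = if i = i₀ then c ⬝ᵥ t else t i := by
    intro i
    rw [hA, ← Matrix.mulVec_mulVec, ← ht']
    by_cases hi : i = i₀
    · subst hi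
      simp [Matrix.mulVec, hMC, Matrix.updateRow_self]
    · simp only [Matrix.mulVec, hMC, Matrix.updateRow_ne hi]
      simp only [Matrix.one_apply, dotProduct, ite_mul, one_mul, zero_mul, Finset.sum_ite_eq,
        Finset.mem_univ, if_true]
      rw [if_neg hi]
  have hti : ∀ i, i ≠ i₀ → |t i| ≤ (1+ε) * C / lv i := by
    intro i hi
    have hb := hvb i
    rw [hAmul i, if_neg hi, hρne i hi] at hb
    exact hb
  -- the dot product vanishes
  have hdot : c ⬝ᵥ t = 0 := by
    have hval : c ⬝ᵥ t = ((x ⬝ᵥ x' - y ⬝ᵥ y' : ℤ) : ℝ) := by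
      rw [ht, hc', sumElim_dotProduct_sumElim]
      have hxx : ivec x ⬝ᵥ (ivec x' - Θᵀ.mulVec (ivec y'))
          = ivec x ⬝ᵥ ivec x' - ivec x ⬝ᵥ (Θᵀ.mulVec (ivec y')) := by
        simp [dotProduct, Finset.sum_sub_distrib, mul_sub]
      have hyy : e ⬝ᵥ ivec y'
          = (Θ.mulVec (ivec x)) ⬝ᵥ ivec y' - ivec y ⬝ᵥ ivec y' := by
        simp [he, dotProduct, Finset.sum_sub_distrib, sub_mul]
      rw [hxx, hyy]
      have hcancel : ivec x ⬝ᵥ (Θᵀ.mulVec (ivec y')) = (Θ.mulVec (ivec x)) ⬝ᵥ ivec y' := by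
        rw [Matrix.dotProduct_mulVec, Matrix.vecMul_transpose]
      rw [hcancel]
      simp only [dotProduct, ivec]
      push_cast
      ring
    have hb := hvb i₀
    rw [hAmul i₀, if_pos rfl, hρi₀] at hb
    rw [hval] at hb ⊢
    have hlt : |((x ⬝ᵥ x' - y ⬝ᵥ y' : ℤ) : ℝ)| < 1 := lt_of_le_of_lt hb (by nlinarith)
    rw [← Int.cast_abs] at hlt
    have hz : |(x ⬝ᵥ x' - y ⬝ᵥ y' : ℤ)| < 1 := by exact_mod_cast hlt
    rw [abs_lt] at hz
    have hz0 : (x ⬝ᵥ x' - y ⬝ᵥ y' : ℤ) = 0 := by omega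
    rw [hz0]; simp
  -- bound on t i₀
  have hεC : (0:ℝ) < (1+ε) * C := by nlinarith
  have hti₀ : |t i₀| ≤ (K : ℝ) * ((1+ε) * C) / lv i₀ := by
    have hsplit : c i₀ * t i₀ + ∑ i ∈ Finset.univ.erase i₀, c i * t i = 0 := by
      rw [← hdot, dotProduct, ← Finset.add_sum_erase Finset.univ _ (Finset.mem_univ i₀)]
    have habs : |c i₀ * t i₀| ≤ ∑ i ∈ Finset.univ.erase i₀, |c i * t i| := by
      have hneg : c i₀ * t i₀ = -∑ i ∈ Finset.univ.erase i₀, c i * t i := by linarith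
      rw [hneg, abs_neg]
      exact Finset.abs_sum_le_sum_abs _ _
    have hterm : ∀ i ∈ Finset.univ.erase i₀, |c i * t i| ≤ |c i₀| * ((1+ε) * C) / lv i₀ := by
      intro i hi
      have hi' := Finset.ne_of_mem_erase hi
      rw [abs_mul]
      have hci : |c i| ≤ lv i * (|c i₀| / lv i₀) := by
        have hr := hmax' i
        rw [div_le_div_iff₀ (hlv0 i) (hlv0 i₀)] at hr
        rw [mul_comm, div_mul_eq_mul_div, le_div_iff₀ (hlv0 i₀)]
        exact hr
      calc |c i| * |t i| ≤ (lv i * (|c i₀| / lv i₀)) * ((1+ε) * C / lv i) := by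
            exact mul_le_mul hci (hti i hi') (abs_nonneg _)
              (mul_nonneg (le_of_lt (hlv0 i)) (div_nonneg (abs_nonneg _) (le_of_lt (hlv0 i₀))))
        _ = |c i₀| * ((1+ε) * C) / lv i₀ := by
            field_simp [ne_of_gt (hlv0 i), ne_of_gt (hlv0 i₀)]
    have hsum2 : ∑ i ∈ Finset.univ.erase i₀, |c i * t i|
        ≤ (K:ℝ) * (|c i₀| * ((1+ε) * C) / lv i₀) := by
      calc ∑ i ∈ Finset.univ.erase i₀, |c i * t i|
          ≤ ∑ _i ∈ Finset.univ.erase i₀, |c i₀| * ((1+ε) * C) / lv i₀ :=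
            Finset.sum_le_sum hterm
        _ = (K:ℝ) * (|c i₀| * ((1+ε) * C) / lv i₀) := by
            rw [Finset.sum_const, hcarderase]; simp [nsmul_eq_mul]
    have h := le_trans habs hsum2
    rw [abs_mul] at h
    have h2 : (K:ℝ) * (|c i₀| * ((1+ε) * C) / lv i₀) = |c i₀| * ((K:ℝ) * ((1+ε) * C) / lv i₀) := by
      ring
    rw [h2] at h
    exact le_of_mul_le_mul_left h hc0
  have htall : ∀ i, |t i| ≤ (K : ℝ) * ((1+ε) * C) / lv i := by
    intro i
    by_cases hi : i = i₀
    · subst hi; exact hti₀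
    · calc |t i| ≤ (1+ε) * C / lv i := hti i hi
        _ ≤ (K:ℝ) * ((1+ε) * C) / lv i := by
            rw [div_le_div_iff₀ (hlv0 i) (hlv0 i)]
            have hK1' : (1:ℝ) ≤ (K:ℝ) := by exact_mod_cast hK1
            nlinarith [mul_pos hεC (hlv0 i),
              mul_nonneg (mul_nonneg (sub_nonneg.mpr hK1') (le_of_lt hεC)) (le_of_lt (hlv0 i))]
  -- read off the conclusions
  have hYnn : (0:ℝ) ≤ (1+ε) * Y := by
    rw [hYC, ← hKcast]
    positivity
  have hVnn : (0:ℝ) ≤ (1+ε) * V := by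
    rw [hVC, ← hKcast]
    positivity
  have hy'bound : ∀ i, |(y' i : ℝ)| ≤ (1+ε) * Y := by
    intro i
    have hb := htall (Sum.inr i)
    rw [ht] at hb
    simp only [Sum.elim_inr, hlv] at hb
    calc |(y' i : ℝ)| = |(ivec y') i| := rfl
      _ ≤ (K:ℝ) * ((1+ε) * C) / U := hb
      _ = (1+ε) * Y := by rw [hYC, ← hKcast]; ring
  have hx'bound : ∀ k, |(Θᵀ.mulVec (ivec y') - ivec x') k| ≤ (1+ε) * V := by
    intro k
    have hb := htall (Sum.inl k)
    rw [ht] at hb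
    simp only [Sum.elim_inl, hlv, Pi.sub_apply] at hb
    rw [Pi.sub_apply, abs_sub_comm]
    calc |(ivec x') k - Θᵀ.mulVec (ivec y') k| ≤ (K:ℝ) * ((1+ε) * C) / X := hb
      _ = (1+ε) * V := by rw [hVC, ← hKcast]; ring
  have hV0 : 0 ≤ V := by
    rw [hVC, ← hKcast]; positivity
  have hy'0 : y' ≠ 0 := by
    intro hy0
    apply hv0
    have hΘ0 : Θᵀ.mulVec (ivec y') = 0 := by
      rw [hy0]
      have : ivec (0 : Fin n → ℤ) = 0 := by funext i; simp [ivec]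
      rw [this, Matrix.mulVec_zero]
    have hx0' : ∀ k, x' k = 0 := by
      intro k
      have hb := hx'bound k
      rw [hΘ0, Pi.sub_apply, Pi.zero_apply, zero_sub, abs_neg] at hb
      have hb1 : |(x' k : ℝ)| < 1 := by
        calc |(x' k : ℝ)| = |(ivec x') k| := rfl
          _ ≤ (1+ε) * V := hb
          _ < 1 := by nlinarith
      rw [← Int.cast_abs] at hb1
      have habs1 : |x' k| < 1 := by exact_mod_cast hb1
      rw [abs_lt] at habs1
      omega
    funext j
    rcases j with k | i
    · exact hx0' k
    · exact congrFun hy0 i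
  refine ⟨x', y', hy'0, ?_, ?_⟩
  · rw [pi_norm_le_iff_of_nonneg hYnn]
    intro i
    rw [Real.norm_eq_abs]
    exact hy'bound i
  · rw [pi_norm_le_iff_of_nonneg hVnn]
    intro k
    rw [Real.norm_eq_abs]
    exact hx'bound k

set_option maxHeartbeats 1000000 in
/-- Theorem 1 (Mahler's transference theorem). -/
theorem mahler_transference (n m : ℕ) (hn : 0 < n) (hm : 0 < m)
    (Θ : Matrix (Fin n) (Fin m) ℝ) (X U Y V : ℝ)
    (hY : Y = ((n + m : ℝ) - 1) * (X ^ (m:ℝ) * U ^ (1 - (m:ℝ))) ^ ((1:ℝ)/((n + m : ℝ) - 1)))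
    (hV : V = ((n + m : ℝ) - 1) * (X ^ (1 - (n:ℝ)) * U ^ (n:ℝ)) ^ ((1:ℝ)/((n + m : ℝ) - 1)))
    (hU0 : 0 < U) (hU1 : U < 1) (hX : 1 ≤ X)
    (x : Fin m → ℤ) (y : Fin n → ℤ) (hx : x ≠ 0)
    (h1 : ‖ivec x‖ ≤ X)
    (h2 : ‖Θ.mulVec (ivec x) - ivec y‖ ≤ U) :
    ∃ x' : Fin m → ℤ, ∃ y' : Fin n → ℤ, y' ≠ 0 ∧
      ‖ivec y'‖ ≤ Y ∧
      ‖(Θᵀ).mulVec (ivec y') - ivec x'‖ ≤ V := by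
  classical
  have hX0 : (0:ℝ) < X := lt_of_lt_of_le zero_lt_one hX
  set D : ℝ := (n + m : ℝ) - 1 with hD
  have hn1 : (1:ℝ) ≤ (n:ℝ) := by exact_mod_cast hn
  have hm1 : (1:ℝ) ≤ (m:ℝ) := by exact_mod_cast hm
  have hD1 : 1 ≤ D := by rw [hD]; linarith
  have hD0 : (0:ℝ) < D := by linarith
  have hDne : D ≠ 0 := ne_of_gt hD0
  set C : ℝ := (X ^ (m:ℝ) * U ^ (n:ℝ)) ^ ((1:ℝ)/D) with hCdef
  have hbase0 : (0:ℝ) < X ^ (m:ℝ) * U ^ (n:ℝ) := by positivity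
  have hC0 : 0 < C := Real.rpow_pos_of_pos hbase0 _
  have hDval : ((m + n - 1 : ℕ) : ℝ) = D := by
    rw [hD]
    push_cast [Nat.cast_sub (by omega : 1 ≤ m + n)]
    ring
  have hCpow : C ^ (m + n - 1) = X ^ m * U ^ n := by
    have h1' : C ^ (m + n - 1) = C ^ (((m + n - 1 : ℕ) : ℝ)) := (Real.rpow_natCast C _).symm
    rw [h1', hDval, hCdef, ← Real.rpow_mul (le_of_lt hbase0), one_div,
      inv_mul_cancel₀ hDne, Real.rpow_one]
    rw [Real.rpow_natCast, Real.rpow_natCast]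
  have hYC : Y = D * C / U := by
    have hsplit : X ^ (m:ℝ) * U ^ (n:ℝ) = (X ^ (m:ℝ) * U ^ (1 - (m:ℝ))) * U ^ D := by
      rw [mul_assoc, ← Real.rpow_add hU0]
      congr 1
      rw [hD]; ring_nf
    have hCU : C = (X ^ (m:ℝ) * U ^ (1 - (m:ℝ))) ^ ((1:ℝ)/D) * U := by
      rw [hCdef, hsplit, Real.mul_rpow (by positivity) (by positivity)]
      congr 1
      rw [← Real.rpow_mul (le_of_lt hU0), mul_one_div, div_self hDne, Real.rpow_one]
    rw [hY, hCU]
    field_simp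
  have hVC : V = D * C / X := by
    have hsplit : X ^ (m:ℝ) * U ^ (n:ℝ) = (X ^ (1 - (n:ℝ)) * U ^ (n:ℝ)) * X ^ D := by
      rw [mul_comm (X ^ (1 - (n:ℝ))) (U ^ (n:ℝ)), mul_assoc, ← Real.rpow_add hX0,
        mul_comm (U ^ (n:ℝ))]
      congr 1
      rw [hD]; ring_nf
    have hCX : C = (X ^ (1 - (n:ℝ)) * U ^ (n:ℝ)) ^ ((1:ℝ)/D) * X := by
      rw [hCdef, hsplit, Real.mul_rpow (by positivity) (by positivity)]
      congr 1
      rw [← Real.rpow_mul (le_of_lt hX0), mul_one_div, div_self hDne, Real.rpow_one]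
    rw [hV, hCX]
    field_simp
  have hV0 : 0 < V := by rw [hVC]; positivity
  have hY1 : 1 ≤ Y := by
    have hU1m : (1:ℝ) ≤ U ^ (1 - (m:ℝ)) :=
      Real.one_le_rpow_of_pos_of_le_one_of_nonpos hU0 (le_of_lt hU1) (by linarith)
    have hXm : (1:ℝ) ≤ X ^ (m:ℝ) := Real.one_le_rpow hX (by linarith)
    have hb1 : (1:ℝ) ≤ X ^ (m:ℝ) * U ^ (1 - (m:ℝ)) := by nlinarith
    have : (1:ℝ) ≤ (X ^ (m:ℝ) * U ^ (1 - (m:ℝ))) ^ ((1:ℝ)/D) :=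
      Real.one_le_rpow hb1 (by positivity)
    rw [hY]
    nlinarith
  rcases le_or_gt (1/2 : ℝ) V with hV2 | hV2
  · -- trivial case : round a basis vector
    set y' : Fin n → ℤ := fun i => if i = ⟨0, hn⟩ then 1 else 0 with hy'
    set x' : Fin m → ℤ := fun k => round (Θᵀ.mulVec (ivec y') k) with hx'
    refine ⟨x', y', ?_, ?_, ?_⟩
    · intro h0
      have := congrFun h0 ⟨0, hn⟩
      simp [hy'] at this
    · rw [pi_norm_le_iff_of_nonneg (by linarith : (0:ℝ) ≤ Y)]
      intro i
      rw [Real.norm_eq_abs]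
      simp only [ivec, hy']
      by_cases hi : i = ⟨0, hn⟩ <;> simp [hi] <;> linarith
    · rw [pi_norm_le_iff_of_nonneg (by linarith : (0:ℝ) ≤ V)]
      intro k
      rw [Real.norm_eq_abs, Pi.sub_apply]
      have : |Θᵀ.mulVec (ivec y') k - (ivec x') k| ≤ 1/2 := by
        simp only [hx', ivec]
        exact abs_sub_round _
      calc |Θᵀ.mulVec (ivec y') k - (ivec x') k| ≤ 1/2 := this
        _ ≤ V := hV2
  · -- main case
    have hstep : ∀ j : ℕ, ∃ x' : Fin m → ℤ, ∃ y' : Fin n → ℤ, y' ≠ 0 ∧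
        ‖ivec y'‖ ≤ (1 + 1/(j+2 : ℝ)) * Y ∧
        ‖(Θᵀ).mulVec (ivec y') - ivec x'‖ ≤ (1 + 1/(j+2 : ℝ)) * V := by
      intro j
      have hj2 : (0:ℝ) < (j+2 : ℝ) := by positivity
      refine key_step n m hn hm Θ X U Y V C hU0 hX (by rw [hYC, hD]) (by rw [hVC, hD])
        hC0 hCpow x y hx h1 h2 (1/(j+2 : ℝ)) (by positivity) ?_ hV2
      rw [div_le_div_iff₀ hj2 (by norm_num : (0:ℝ) < 2)]
      linarith
    choose xs ys hys0 hysY hysV using hstep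
    -- all the candidates lie in a fixed finite set
    set M : ℝ := ∑ k, ∑ i, |Θᵀ k i| with hM
    have hM0 : 0 ≤ M := by positivity
    have hjfac : ∀ j : ℕ, (1 + 1/(j+2 : ℝ)) ≤ 2 := by
      intro j
      have hj2 : (1:ℝ) ≤ (j+2 : ℝ) := by
        have : (0:ℝ) ≤ (j:ℝ) := by positivity
        linarith
      have : 1/(j+2 : ℝ) ≤ 1 := by
        rw [div_le_one (by linarith)]
        linarith
      linarith
    have hYnn : (0:ℝ) ≤ Y := by linarith
    have hy'b : ∀ j i, |((ys j) i : ℝ)| ≤ 2 * Y := by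
      intro j i
      have h := le_trans (norm_le_pi_norm (ivec (ys j)) i) (hysY j)
      rw [Real.norm_eq_abs] at h
      calc |((ys j) i : ℝ)| = |(ivec (ys j)) i| := rfl
        _ ≤ (1 + 1/(j+2 : ℝ)) * Y := h
        _ ≤ 2 * Y := by nlinarith [hjfac j]
    have hx'b : ∀ j k, |((xs j) k : ℝ)| ≤ 2 * V + M * (2 * Y) := by
      intro j k
      have h := le_trans (norm_le_pi_norm ((Θᵀ).mulVec (ivec (ys j)) - ivec (xs j)) k) (hysV j)
      rw [Real.norm_eq_abs, Pi.sub_apply] at h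
      have hθ : |Θᵀ.mulVec (ivec (ys j)) k| ≤ M * (2 * Y) := by
        rw [Matrix.mulVec, dotProduct]
        calc |∑ i, Θᵀ k i * (ivec (ys j)) i| ≤ ∑ i, |Θᵀ k i * (ivec (ys j)) i| :=
              Finset.abs_sum_le_sum_abs _ _
          _ ≤ ∑ i, |Θᵀ k i| * (2 * Y) := by
              apply Finset.sum_le_sum
              intro i _
              rw [abs_mul]
              exact mul_le_mul_of_nonneg_left (hy'b j i) (abs_nonneg _)
          _ = (∑ i, |Θᵀ k i|) * (2 * Y) := by rw [Finset.sum_mul]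
          _ ≤ M * (2 * Y) := by
              apply mul_le_mul_of_nonneg_right _ (by linarith)
              rw [hM]
              exact Finset.single_le_sum (f := fun k => ∑ i, |Θᵀ k i|)
                (fun _ _ => by positivity) (Finset.mem_univ k)
      have habs : |((xs j) k : ℝ)| ≤ |Θᵀ.mulVec (ivec (ys j)) k - (ivec (xs j)) k|
          + |Θᵀ.mulVec (ivec (ys j)) k| := by
        have : ((xs j) k : ℝ) = -(Θᵀ.mulVec (ivec (ys j)) k - (ivec (xs j)) k)
            + Θᵀ.mulVec (ivec (ys j)) k := by
          simp [ivec]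
        rw [this]
        calc |_ + _| ≤ |-(Θᵀ.mulVec (ivec (ys j)) k - (ivec (xs j)) k)| + |Θᵀ.mulVec (ivec (ys j)) k| := abs_add_le _ _
          _ = _ := by rw [abs_neg]
      have hVb : |Θᵀ.mulVec (ivec (ys j)) k - (ivec (xs j)) k| ≤ 2 * V := by
        calc |Θᵀ.mulVec (ivec (ys j)) k - (ivec (xs j)) k| ≤ (1 + 1/(j+2 : ℝ)) * V := h
          _ ≤ 2 * V := by nlinarith [hjfac j]
      linarith
    -- pigeonhole
    set R : ℤ := ⌈2 * V + M * (2 * Y) + 2 * Y⌉ with hR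
    have hRb : (2 * V + M * (2 * Y) + 2 * Y : ℝ) ≤ (R : ℝ) := Int.le_ceil _
    set S : Set ((Fin m → ℤ) × (Fin n → ℤ)) :=
      (Set.pi Set.univ fun _ : Fin m => Set.Icc (-R) R) ×ˢ
      (Set.pi Set.univ fun _ : Fin n => Set.Icc (-R) R) with hS
    have hSfin : S.Finite := by
      apply Set.Finite.prod
      · exact Set.Finite.pi fun _ => Set.finite_Icc _ _
      · exact Set.Finite.pi fun _ => Set.finite_Icc _ _
    haveI : Finite S := hSfin.to_subtype
    have hmem : ∀ j : ℕ, (xs j, ys j) ∈ S := by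
      intro j
      rw [hS, Set.mem_prod]
      constructor
      · intro k _
        rw [Set.mem_Icc]
        have h := hx'b j k
        have h1' : |((xs j) k : ℝ)| ≤ (R:ℝ) := by linarith [abs_nonneg ((Θᵀ.mulVec (ivec (ys j)) k)), mul_nonneg hM0 (by linarith : (0:ℝ) ≤ 2*Y)]
        rw [← Int.cast_abs] at h1'
        have : |(xs j) k| ≤ R := by exact_mod_cast h1'
        rw [abs_le] at this
        exact this
      · intro i _
        rw [Set.mem_Icc]
        have h := hy'b j i
        have h1' : |((ys j) i : ℝ)| ≤ (R:ℝ) := by nlinarith [mul_nonneg hM0 (by linarith : (0:ℝ) ≤ 2*Y), hV0]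
        rw [← Int.cast_abs] at h1'
        have : |(ys j) i| ≤ R := by exact_mod_cast h1'
        rw [abs_le] at this
        exact this
    set f : ℕ → S := fun j => ⟨(xs j, ys j), hmem j⟩ with hf
    obtain ⟨p, hp⟩ := Finite.exists_infinite_fiber f
    have hpinf : (f ⁻¹' {p} : Set ℕ).Infinite := Set.infinite_coe_iff.mp hp
    obtain ⟨j₀, hj₀⟩ := hpinf.nonempty
    have hj₀' : f j₀ = p := hj₀
    set xb : Fin m → ℤ := (p : (Fin m → ℤ) × (Fin n → ℤ)).1 with hxb
    set yb : Fin n → ℤ := (p : (Fin m → ℤ) × (Fin n → ℤ)).2 with hyb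
    have hxsj : ∀ j ∈ (f ⁻¹' {p} : Set ℕ), xs j = xb ∧ ys j = yb := by
      intro j hj
      have : f j = p := hj
      rw [hf] at this
      have h2' := congrArg Subtype.val this
      exact ⟨congrArg Prod.fst h2', congrArg Prod.snd h2'⟩
    have hyb0 : yb ≠ 0 := by
      rw [← (hxsj j₀ hj₀).2]
      exact hys0 j₀
    refine ⟨xb, yb, hyb0, ?_, ?_⟩
    · -- limit argument for Y
      by_contra hcon
      push_neg at hcon
      set η := ‖ivec yb‖ - Y with hη
      have hη0 : 0 < η := by rw [hη]; linarith
      obtain ⟨j, hjmem, hjlarge⟩ := hpinf.exists_gt ⌈Y / η⌉₊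
      obtain ⟨hjx, hjy⟩ := hxsj j hjmem
      have hb := hysY j
      rw [hjy] at hb
      have hj1 : Y / η < (j : ℝ) := by
        calc Y / η ≤ (⌈Y / η⌉₊ : ℝ) := Nat.le_ceil _
          _ < (j : ℝ) := by exact_mod_cast hjlarge
      have hjpos : (0:ℝ) < (j:ℝ) + 2 := by positivity
      have hfrac : Y / ((j:ℝ)+2) < η := by
        rw [div_lt_iff₀ hjpos]
        rw [div_lt_iff₀ hη0] at hj1
        nlinarith
      have : ‖ivec yb‖ ≤ Y + Y / ((j:ℝ)+2) := by
        calc ‖ivec yb‖ ≤ (1 + 1/((j:ℝ)+2)) * Y := hb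
          _ = Y + Y / ((j:ℝ)+2) := by ring
      rw [hη] at hfrac hη0
      linarith
    · by_contra hcon
      push_neg at hcon
      set η := ‖(Θᵀ).mulVec (ivec yb) - ivec xb‖ - V with hη
      have hη0 : 0 < η := by rw [hη]; linarith
      obtain ⟨j, hjmem, hjlarge⟩ := hpinf.exists_gt ⌈V / η⌉₊
      obtain ⟨hjx, hjy⟩ := hxsj j hjmem
      have hb := hysV j
      rw [hjy, hjx] at hb
      have hj1 : V / η < (j : ℝ) := by
        calc V / η ≤ (⌈V / η⌉₊ : ℝ) := Nat.le_ceil _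
          _ < (j : ℝ) := by exact_mod_cast hjlarge
      have hjpos : (0:ℝ) < (j:ℝ) + 2 := by positivity
      have hfrac : V / ((j:ℝ)+2) < η := by
        rw [div_lt_iff₀ hjpos]
        rw [div_lt_iff₀ hη0] at hj1
        nlinarith
      have : ‖(Θᵀ).mulVec (ivec yb) - ivec xb‖ ≤ V + V / ((j:ℝ)+2) := by
        calc ‖(Θᵀ).mulVec (ivec yb) - ivec xb‖ ≤ (1 + 1/((j:ℝ)+2)) * V := hb
          _ = V + V / ((j:ℝ)+2) := by ring
      rw [hη] at hfrac hη0
      linarith
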